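/- For the mechanism-ONE instance with two equally likely queries, q₁ = {A=(0.2,2,z₁), B=(0.1,1,z₁), E=(1.0,9,z₂)} and q₂ = {C=(0.1,2,z₁), D=(0.2,1,z₁)}, Property E2 holds (E_C[p | z₁, b=1] = E_C[p | z₁, b=2] = 0.15) but selection invariance fails: for f with f(z₁)=0.5, f(z₂)=1, the shown ads are E on q₁ and C on q₂ giving E_f[p | z₁] = 0.1, while for f' with f'(z₁)=1, f'(z₂)=0, the shown ads are A on q₁ and C on q₂ giving E_{f'}[p | z₁] = 0.15. -/

import Mathlib

open Finset Classical

/- Mechanism ONE, two equally likely queries.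
Ads (indexed 0..4): A = (0.2, 2, z₁) and B = (0.1, 1, z₁) and E = (1.0, 9, z₂) on q₁;
C = (0.1, 2, z₁) and D = (0.2, 1, z₁) on q₂.  Buckets: z₁ = 1, z₂ = 2. -/

/-- CTRs of A, B, E, C, D -/
noncomputable def p16 : Fin 5 → ℝ := ![0.2, 0.1, 1.0, 0.1, 0.2]
/-- bids -/
noncomputable def b16 : Fin 5 → ℝ := ![2, 1, 9, 2, 1]
/-- buckets -/
def z16 : Fin 5 → ℕ := ![1, 1, 2, 1, 1]
/-- queries -/
def q16 : Fin 5 → ℕ := ![1, 1, 1, 2, 2]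

/-- ads that can show on query `q'` under map `f` (mechanism ONE) -/
noncomputable def shown16 (f : ℕ → ℝ) (q' : ℕ) : Finset (Fin 5) :=
  Finset.univ.filter
    (fun i => q16 i = q' ∧ ∀ j, q16 j = q' → b16 j * f (z16 j) ≤ b16 i * f (z16 i))

/-- show weight of ad `i` under `f` (queries equally likely, ties uniform) -/
noncomputable def wt16 (f : ℕ → ℝ) (i : Fin 5) : ℝ :=
  if i ∈ shown16 f (q16 i) then 1 / ((shown16 f (q16 i)).card : ℝ) else 0

/-- `E_f[p | z']`: mean CTR over shown ads of bucket `z'` under `f` -/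
noncomputable def obs16 (f : ℕ → ℝ) (z' : ℕ) : ℝ :=
  (∑ i ∈ Finset.univ.filter (fun i => z16 i = z'), wt16 f i * p16 i) /
    (∑ i ∈ Finset.univ.filter (fun i => z16 i = z'), wt16 f i)

/-- the map `f(z₁) = 0.5, f(z₂) = 1` -/
noncomputable def f16 : ℕ → ℝ := fun m => if m = 1 then 0.5 else if m = 2 then 1 else 0
/-- the map `f'(z₁) = 1, f'(z₂) = 0` -/
noncomputable def f16' : ℕ → ℝ := fun m => if m = 1 then 1 else 0

lemma s1 : shown16 f16 1 = {2} := by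
  ext i; fin_cases i <;>
    simp [shown16, q16, b16, z16, f16, Fin.forall_fin_succ, Fin.isValue] <;> norm_num

lemma s2 : shown16 f16 2 = {3} := by
  ext i; fin_cases i <;>
    simp [shown16, q16, b16, z16, f16, Fin.forall_fin_succ, Fin.isValue] <;> norm_num

lemma s1' : shown16 f16' 1 = {0} := by
  ext i; fin_cases i <;>
    simp [shown16, q16, b16, z16, f16', Fin.forall_fin_succ, Fin.isValue] <;> norm_num

lemma s2' : shown16 f16' 2 = {3} := by
  ext i; fin_cases i <;>
    simp [shown16, q16, b16, z16, f16', Fin.forall_fin_succ, Fin.isValue] <;> norm_num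

lemma o1 : obs16 f16 1 = 0.1 := by
  have h : Finset.univ.filter (fun i : Fin 5 => z16 i = 1) = {0, 1, 3, 4} := by decide
  rw [obs16, h]
  simp [wt16, q16, s1, s2, p16, Fin.isValue]

lemma o1' : obs16 f16' 1 = 0.15 := by
  have h : Finset.univ.filter (fun i : Fin 5 => z16 i = 1) = {0, 1, 3, 4} := by decide
  rw [obs16, h]
  simp [wt16, q16, s1', s2', p16, Fin.isValue]
  norm_num

/-- Property E2 holds: `E_C[p | z₁, b=1] = E_C[p | z₁, b=2] = 0.15`.  But selection
invariance fails: under `f` the shown ads are E on q₁ and C on q₂, so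
`E_f[p | z₁] = 0.1`, while under `f'` they are A on q₁ and C on q₂, so
`E_{f'}[p | z₁] = 0.15`. -/
theorem propE2_without_selection_invariance_ONE :
    ((∑ i ∈ Finset.univ.filter (fun i => z16 i = 1 ∧ b16 i = 1), p16 i) /
        ((Finset.univ.filter (fun i : Fin 5 => z16 i = 1 ∧ b16 i = 1)).card : ℝ) = 0.15) ∧
    ((∑ i ∈ Finset.univ.filter (fun i => z16 i = 1 ∧ b16 i = 2), p16 i) /
        ((Finset.univ.filter (fun i : Fin 5 => z16 i = 1 ∧ b16 i = 2)).card : ℝ) = 0.15) ∧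
    (shown16 f16 1 = {2} ∧ shown16 f16 2 = {3}) ∧
    (shown16 f16' 1 = {0} ∧ shown16 f16' 2 = {3}) ∧
    obs16 f16 1 = 0.1 ∧ obs16 f16' 1 = 0.15 ∧ obs16 f16 1 ≠ obs16 f16' 1 := by
  have e1 : Finset.univ.filter (fun i : Fin 5 => z16 i = 1 ∧ b16 i = 1) = {1, 4} := by
    ext i; simp only [Finset.mem_filter, Finset.mem_univ, true_and]; fin_cases i <;> simp [z16, b16, Fin.isValue] <;> norm_num
  have e2 : Finset.univ.filter (fun i : Fin 5 => z16 i = 1 ∧ b16 i = 2) = {0, 3} := by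
    ext i; simp only [Finset.mem_filter, Finset.mem_univ, true_and]; fin_cases i <;> simp [z16, b16, Fin.isValue] <;> norm_num
  refine ⟨?_, ?_, ⟨s1, s2⟩, ⟨s1', s2'⟩, o1, o1', by rw [o1, o1']; norm_num⟩
  · rw [e1]; simp [p16, Fin.isValue]; norm_num
  · rw [e2]; simp [p16, Fin.isValue]; norm_num
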